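/- Suppose Δ_h is a complete abstraction of Δ_l relative to m (every model of Δ_h has an m-isomorphic model of Δ_l), in the unweighted setting. Then for every high-level formula φ: (a) if Pr(φ, Δ_h, w_h) > 0 then Pr(m(φ), Δ_l, w_l) > 0; and (b) if Pr(m(φ), Δ_l, w_l) = 1 then Pr(φ, Δ_h, w_h) = 1. -/
import Mathlib


/-- Propositional formulas over atoms of type `α`. -/
inductive Form (α : Type) where
  | tru : Form α
  | atom : α → Form α
  | neg : Form α → Form α
  | conj : Form α → Form α → Form α
  | disj : Form α → Form α → Form α

/-- Truth value of a formula in a model `M : α → Bool`. -/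
def Form.eval {α : Type} (M : α → Bool) : Form α → Bool
  | .tru => true
  | .atom a => M a
  | .neg φ => !(φ.eval M)
  | .conj φ ψ => φ.eval M && ψ.eval M
  | .disj φ ψ => φ.eval M || ψ.eval M

/-- Homomorphic extension of a refinement mapping `m` on atoms to all formulas. -/
def Form.map {α β : Type} (m : α → Form β) : Form α → Form β
  | .tru => .tru
  | .atom a => m a
  | .neg φ => .neg (φ.map m)
  | .conj φ ψ => .conj (φ.map m) (ψ.map m)
  | .disj φ ψ => .disj (φ.map m) (ψ.map m)

/-- The set of atoms mentioned in a formula. -/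
def Form.atoms {α : Type} [DecidableEq α] : Form α → Finset α
  | .tru => ∅
  | .atom a => {a}
  | .neg φ => φ.atoms
  | .conj φ ψ => φ.atoms ∪ ψ.atoms
  | .disj φ ψ => φ.atoms ∪ ψ.atoms

/-- Weighted model count of `Δ` under literal weights `w` (`w a true` is the
weight of the positive literal on atom `a`, `w a false` of the negative one). -/
noncomputable def WMC {α : Type} [Fintype α] [DecidableEq α]
    (Δ : Form α) (w : α → Bool → ℝ) : ℝ :=
  ∑ M ∈ Finset.univ.filter (fun M : α → Bool => Δ.eval M = true), ∏ a, w a (M a)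

/-- `Pr(φ, Δ, w) = WMC(φ ∧ Δ, w) / WMC(Δ, w)`. -/
noncomputable def Pr {α : Type} [Fintype α] [DecidableEq α]
    (φ Δ : Form α) (w : α → Bool → ℝ) : ℝ :=
  WMC (Form.conj φ Δ) w / WMC Δ w

/-- `Mh` is `m`-isomorphic to `Ml`. -/
def Iso {α β : Type} (m : α → Form β) (Mh : α → Bool) (Ml : β → Bool) : Prop :=
  ∀ a : α, Mh a = (m a).eval Ml

lemma map_eval {α β : Type} (m : α → Form β) {Mh : α → Bool} {Ml : β → Bool}
    (h : Iso m Mh Ml) : ∀ φ : Form α, (φ.map m).eval Ml = φ.eval Mh := by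
  intro φ
  induction φ with
  | tru => rfl
  | atom a => exact (h a).symm
  | neg φ ih => simp [Form.map, Form.eval, ih]
  | conj φ ψ ih1 ih2 => simp [Form.map, Form.eval, ih1, ih2]
  | disj φ ψ ih1 ih2 => simp [Form.map, Form.eval, ih1, ih2]

lemma WMC_one {α : Type} [Fintype α] [DecidableEq α] (Δ : Form α) :
    WMC Δ (fun _ _ => (1:ℝ)) =
      ((Finset.univ.filter (fun M : α → Bool => Δ.eval M = true)).card : ℝ) := by
  simp [WMC]

lemma Pr_one {α : Type} [Fintype α] [DecidableEq α] (φ Δ : Form α) :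
    Pr φ Δ (fun _ _ => (1:ℝ)) =
      ((Finset.univ.filter (fun M : α → Bool => (Form.conj φ Δ).eval M = true)).card : ℝ) /
      ((Finset.univ.filter (fun M : α → Bool => Δ.eval M = true)).card : ℝ) := by
  simp [Pr, WMC_one]

theorem stmt6 {α β : Type} [Fintype α] [DecidableEq α] [Fintype β] [DecidableEq β]
    (Δh : Form α) (Δl : Form β) (m : α → Form β)
    (hsath : ∃ M : α → Bool, Δh.eval M = true)
    (hsatl : ∃ M : β → Bool, Δl.eval M = true)
    (hcomplete : ∀ Mh : α → Bool, Δh.eval Mh = true →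
      ∃ Ml : β → Bool, Δl.eval Ml = true ∧ Iso m Mh Ml) :
    ∀ φ : Form α,
      (0 < Pr φ Δh (fun _ _ => (1:ℝ)) → 0 < Pr (φ.map m) Δl (fun _ _ => (1:ℝ))) ∧
      (Pr (φ.map m) Δl (fun _ _ => (1:ℝ)) = 1 → Pr φ Δh (fun _ _ => (1:ℝ)) = 1) := by
  intro φ
  set num := fun (γ Δ : Form _) => (Finset.univ.filter (fun M : α → Bool => (Form.conj γ Δ).eval M = true)).card with hn
  obtain ⟨Mh0, hMh0⟩ := hsath
  obtain ⟨Ml0, hMl0⟩ := hsatl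
  have hdenh : (0:ℝ) < ((Finset.univ.filter (fun M : α → Bool => Δh.eval M = true)).card : ℝ) := by
    have : Mh0 ∈ Finset.univ.filter (fun M : α → Bool => Δh.eval M = true) := by simp [hMh0]
    exact_mod_cast Finset.card_pos.mpr ⟨Mh0, this⟩
  have hdenl : (0:ℝ) < ((Finset.univ.filter (fun M : β → Bool => Δl.eval M = true)).card : ℝ) := by
    have : Ml0 ∈ Finset.univ.filter (fun M : β → Bool => Δl.eval M = true) := by simp [hMl0]
    exact_mod_cast Finset.card_pos.mpr ⟨Ml0, this⟩
  constructor
  · intro hpos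
    rw [Pr_one] at hpos ⊢
    have hnum : (Finset.univ.filter (fun M : α → Bool => (Form.conj φ Δh).eval M = true)).Nonempty := by
      by_contra h
      rw [Finset.not_nonempty_iff_eq_empty] at h
      rw [h] at hpos
      simp at hpos
    obtain ⟨Mh, hMh⟩ := hnum
    simp only [Finset.mem_filter, Form.eval, Bool.and_eq_true] at hMh
    obtain ⟨Ml, hMl, hiso⟩ := hcomplete Mh hMh.2.2
    have heval : (φ.map m).eval Ml = true := by rw [map_eval m hiso]; exact hMh.2.1
    apply div_pos _ hdenl
    have : Ml ∈ Finset.univ.filter (fun M : β → Bool => (Form.conj (φ.map m) Δl).eval M = true) := by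
      simp [Form.eval, heval, hMl]
    exact_mod_cast Finset.card_pos.mpr ⟨Ml, this⟩
  · intro h1
    rw [Pr_one] at h1 ⊢
    rw [div_eq_one_iff_eq (ne_of_gt hdenl)] at h1
    have hcard : (Finset.univ.filter (fun M : β → Bool => (Form.conj (φ.map m) Δl).eval M = true)).card
        = (Finset.univ.filter (fun M : β → Bool => Δl.eval M = true)).card := by exact_mod_cast h1
    have hsub : (Finset.univ.filter (fun M : β → Bool => (Form.conj (φ.map m) Δl).eval M = true))
        ⊆ (Finset.univ.filter (fun M : β → Bool => Δl.eval M = true)) := by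
      intro M hM
      simp only [Finset.mem_filter, Form.eval, Bool.and_eq_true] at hM ⊢
      exact ⟨hM.1, hM.2.2⟩
    have heq := Finset.eq_of_subset_of_card_le hsub (le_of_eq hcard.symm)
    have hall : ∀ M : β → Bool, Δl.eval M = true → (φ.map m).eval M = true := by
      intro M hM
      have : M ∈ Finset.univ.filter (fun M : β → Bool => (Form.conj (φ.map m) Δl).eval M = true) := by
        rw [heq]; simp [hM]
      simp only [Finset.mem_filter, Form.eval, Bool.and_eq_true] at this
      exact this.2.1
    have hsets : (Finset.univ.filter (fun M : α → Bool => (Form.conj φ Δh).eval M = true))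
        = (Finset.univ.filter (fun M : α → Bool => Δh.eval M = true)) := by
      apply Finset.filter_congr
      intro M _
      simp only [Form.eval, Bool.and_eq_true, eq_iff_iff]
      constructor
      · exact fun h => h.2
      · intro h
        obtain ⟨Ml, hMl, hiso⟩ := hcomplete M h
        refine ⟨?_, h⟩
        rw [← map_eval m hiso]
        exact hall Ml hMl
    rw [hsets, div_self (ne_of_gt hdenh)]
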